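/- arXiv:2504.17417 — 3 statements merged into one kernel-verified Lean document; each statement's English description precedes it below -/
import Mathlib

section
/- Let A ∈ ℝ^{n×n} be diagonalizable (over ℂ) with distinct eigenvalues λ_1,…,λ_r, and B ∈ ℝ^{n×m}, C ∈ ℝ^{p×n} with C full row rank and p < n. Then the system (A,B,C) is output controllable if and only if Im(Cᵀ) ∩ (⊕_{i=1}^r (ker(λ_i I − Aᵀ) ∩ ker(Bᵀ))) = {0}. -/
open Matrix

/-- Controllability matrix `[B, AB, ..., A^{card-1}B]`. -/
def ctrbMat {s : Type*} [Fintype s] [DecidableEq s] {m : ℕ}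
    (A : Matrix s s ℝ) (B : Matrix s (Fin m) ℝ) :
    Matrix s (Fin (Fintype.card s) × Fin m) ℝ :=
  Matrix.of fun i p => (A ^ (p.1 : ℕ) * B) i p.2

open Module Polynomial

section Aux

lemma ker_map_ofReal_mem {l o : Type*} [Fintype l] [Fintype o] (M : Matrix l o ℝ) (x : o → ℂ) :
    x ∈ LinearMap.ker (M.map Complex.ofReal).mulVecLin ↔
      (fun i => (x i).re) ∈ LinearMap.ker M.mulVecLin ∧
      (fun i => (x i).im) ∈ LinearMap.ker M.mulVecLin := by
  simp only [LinearMap.mem_ker, Matrix.mulVecLin_apply, funext_iff, Matrix.mulVec,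
    dotProduct, Pi.zero_apply, Complex.ext_iff, Matrix.map_apply]
  constructor
  · intro h
    constructor <;> intro j <;> obtain ⟨h1, h2⟩ := h j
    · simpa using h1
    · simpa using h2
  · intro ⟨h1, h2⟩ j
    constructor
    · simpa using h1 j
    · simpa using h2 j

lemma rank_map_ofReal {l o : Type*} [Fintype l] [Fintype o] (M : Matrix l o ℝ) :
    (M.map Complex.ofReal).rank = M.rank := by
  classical
  let e : (LinearMap.ker (M.map Complex.ofReal).mulVecLin).restrictScalars ℝ ≃ₗ[ℝ]
      (LinearMap.ker M.mulVecLin) × (LinearMap.ker M.mulVecLin) :=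
  { toFun := fun x => (⟨fun i => (x.1 i).re, ((ker_map_ofReal_mem M x.1).1 x.2).1⟩,
      ⟨fun i => (x.1 i).im, ((ker_map_ofReal_mem M x.1).1 x.2).2⟩)
    invFun := fun y => ⟨fun i => ⟨y.1.1 i, y.2.1 i⟩,
      (ker_map_ofReal_mem M _).2 ⟨by simpa using y.1.2, by simpa using y.2.2⟩⟩
    map_add' := by intro x y; ext i <;> simp
    map_smul' := by intro r x; ext i <;> simp [Complex.real_smul]
    left_inv := by intro x; ext i <;> simp
    right_inv := by intro y; constructor <;> rfl }
  have h2 : finrank ℝ ((LinearMap.ker (M.map Complex.ofReal).mulVecLin).restrictScalars ℝ)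
      = 2 * finrank ℂ (LinearMap.ker (M.map Complex.ofReal).mulVecLin) := by
    rw [← Complex.finrank_real_complex]
    exact (Module.finrank_mul_finrank ℝ ℂ (LinearMap.ker (M.map Complex.ofReal).mulVecLin)).symm
  have h3 : finrank ℂ (LinearMap.ker (M.map Complex.ofReal).mulVecLin)
      = finrank ℝ (LinearMap.ker M.mulVecLin) := by
    have := e.finrank_eq
    rw [h2] at this
    simp only [Module.finrank_prod] at this
    omega
  have h4 := LinearMap.finrank_range_add_finrank_ker (M.map Complex.ofReal).mulVecLin
  have h5 := LinearMap.finrank_range_add_finrank_ker M.mulVecLin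
  simp only [Module.finrank_pi] at h4 h5
  simp only [Matrix.rank]
  omega

lemma finrank_map_add_finrank_inf_ker {V W : Type*} [AddCommGroup V] [Module ℂ V]
    [AddCommGroup W] [Module ℂ W] [FiniteDimensional ℂ V]
    (f : V →ₗ[ℂ] W) (W₀ : Submodule ℂ V) :
    finrank ℂ (W₀.map f) + finrank ℂ (LinearMap.ker f ⊓ W₀ : Submodule ℂ V) = finrank ℂ W₀ := by
  have h := LinearMap.finrank_range_add_finrank_ker (f.domRestrict W₀)
  rw [LinearMap.range_domRestrict, LinearMap.ker_domRestrict] at h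
  rw [← h]
  congr 1
  have heq : Submodule.comap W₀.subtype (LinearMap.ker f)
      = Submodule.comap W₀.subtype (LinearMap.ker f ⊓ W₀) := by
    ext x; simp
  rw [heq]
  exact ((Submodule.comapSubtypeEquivOfLe (inf_le_right :
    LinearMap.ker f ⊓ W₀ ≤ W₀)).finrank_eq).symm

lemma rank_mul_left_eq_iff {p n : ℕ} {q : Type*} [Fintype q] (C' : Matrix (Fin p) (Fin n) ℂ)
    (N : Matrix (Fin n) q ℂ) (hC' : C'.rank = p) :
    (C' * N).rank = p ↔
      LinearMap.range C'ᵀ.mulVecLin ⊓ LinearMap.ker Nᵀ.mulVecLin = ⊥ := by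
  have hrange : finrank ℂ (LinearMap.range C'ᵀ.mulVecLin) = p := by
    have : C'ᵀ.rank = p := by rw [Matrix.rank_transpose]; exact hC'
    simpa [Matrix.rank] using this
  have h1 : (C' * N).rank
      = finrank ℂ ((LinearMap.range C'ᵀ.mulVecLin).map Nᵀ.mulVecLin) := by
    rw [← Matrix.rank_transpose, Matrix.transpose_mul, Matrix.rank, Matrix.mulVecLin_mul,
      LinearMap.range_comp]
  have h2 := finrank_map_add_finrank_inf_ker Nᵀ.mulVecLin (LinearMap.range C'ᵀ.mulVecLin)
  rw [h1]
  constructor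
  · intro h
    have hz : finrank ℂ (LinearMap.ker Nᵀ.mulVecLin ⊓ LinearMap.range C'ᵀ.mulVecLin :
        Submodule ℂ (Fin n → ℂ)) = 0 := by omega
    rw [inf_comm]
    exact Submodule.finrank_eq_zero.mp hz
  · intro h
    rw [inf_comm] at h
    rw [h] at h2
    simpa [hrange] using h2

lemma map_ofReal_mul {l o q : Type*} [Fintype l] [Fintype o] [Fintype q]
    (M : Matrix l o ℝ) (N : Matrix o q ℝ) :
    (M * N).map Complex.ofReal = M.map Complex.ofReal * N.map Complex.ofReal :=
  Matrix.map_mul (f := Complex.ofRealHom)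
lemma map_ofReal_pow {a : ℕ} (M : Matrix (Fin a) (Fin a) ℝ) (k : ℕ) :
    (M ^ k).map Complex.ofReal = (M.map Complex.ofReal) ^ k := by
  have := map_pow (Complex.ofRealHom.mapMatrix) M k
  exact this

lemma mem_ker_ctrb_iff {n m : ℕ} (A : Matrix (Fin n) (Fin n) ℝ) (B : Matrix (Fin n) (Fin m) ℝ)
    (x : Fin n → ℂ) :
    x ∈ LinearMap.ker (((ctrbMat A B).map Complex.ofReal)ᵀ.mulVecLin) ↔
      ∀ k : ℕ, k < n →
        (B.map Complex.ofReal)ᵀ *ᵥ (((A.map Complex.ofReal)ᵀ ^ k) *ᵥ x) = 0 := by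
  have key : ∀ (k : Fin n) (i : Fin m),
      (((ctrbMat A B).map Complex.ofReal)ᵀ *ᵥ x) (⟨(k : ℕ), by simpa using k.2⟩, i)
        = ((B.map Complex.ofReal)ᵀ *ᵥ (((A.map Complex.ofReal)ᵀ ^ (k : ℕ)) *ᵥ x)) i := by
    intro k i
    rw [Matrix.mulVec_mulVec, ← Matrix.transpose_pow, ← Matrix.transpose_mul,
      ← map_ofReal_pow, ← map_ofReal_mul]
    simp [Matrix.mulVec, dotProduct, ctrbMat, Matrix.transpose_apply, Matrix.map_apply]
  constructor
  · intro h k hk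
    funext i
    have h0 : (((ctrbMat A B).map Complex.ofReal)ᵀ *ᵥ x) = 0 := h
    have := key ⟨k, by simpa using hk⟩ i
    rw [h0] at this
    simpa using this.symm
  · intro h
    have : (((ctrbMat A B).map Complex.ofReal)ᵀ *ᵥ x) = 0 := by
      funext q
      obtain ⟨k, i⟩ := q
      have hk : (k : ℕ) < n := by simpa using k.2
      have := key ⟨k, by simpa using k.2⟩ i
      simp only [Fin.eta] at this
      rw [this, h _ hk]
      simp
    exact this

lemma sum_mulVec' {a b : ℕ} {ι : Type*} (s : Finset ι) (M : ι → Matrix (Fin a) (Fin b) ℂ)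
    (v : Fin b → ℂ) : (∑ i ∈ s, M i) *ᵥ v = ∑ i ∈ s, M i *ᵥ v := by
  classical
  induction s using Finset.cons_induction with
  | empty => simp [Matrix.zero_mulVec]
  | cons i s hi ih => rw [Finset.sum_cons, Finset.sum_cons, Matrix.add_mulVec, ih]

lemma mulVec_sum' {a b : ℕ} {ι : Type*} (s : Finset ι) (G : Matrix (Fin a) (Fin b) ℂ)
    (v : ι → Fin b → ℂ) : G *ᵥ (∑ i ∈ s, v i) = ∑ i ∈ s, G *ᵥ v i := by
  classical
  induction s using Finset.cons_induction with
  | empty => simp [Matrix.mulVec_zero]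
  | cons i s hi ih => rw [Finset.sum_cons, Finset.sum_cons, Matrix.mulVec_add, ih]

lemma all_pow_zero {n m' : ℕ} (hn : 0 < n) (M : Matrix (Fin n) (Fin n) ℂ)
    (G : Matrix (Fin m') (Fin n) ℂ) (x : Fin n → ℂ)
    (h : ∀ k : ℕ, k < n → G *ᵥ ((M ^ k) *ᵥ x) = 0) :
    ∀ k : ℕ, G *ᵥ ((M ^ k) *ᵥ x) = 0 := by
  intro k
  have hMk : M ^ k = aeval M ((X : ℂ[X]) ^ k %ₘ M.charpoly) := by
    have hmod := Polynomial.modByMonic_add_div ((X : ℂ[X]) ^ k) M.charpoly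
    have := congrArg (aeval M) hmod
    simpa [map_add, _root_.map_mul, Matrix.aeval_self_charpoly] using this.symm
  set r := (X : ℂ[X]) ^ k %ₘ M.charpoly with hr
  have hdeg : r.natDegree < n := by
    rcases eq_or_ne r 0 with h0 | h0
    · simpa [h0] using hn
    · have h1 : r.degree < M.charpoly.degree :=
        Polynomial.degree_modByMonic_lt _ (Matrix.charpoly_monic M)
      have := Polynomial.natDegree_lt_natDegree h0 h1
      simpa [Matrix.charpoly_natDegree_eq_dim] using this
  rw [hMk, Polynomial.aeval_eq_sum_range, sum_mulVec', mulVec_sum']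
  refine Finset.sum_eq_zero fun i hi => ?_
  have hi' : i < n := by
    have := Finset.mem_range.mp hi
    omega
  rw [Matrix.smul_mulVec, Matrix.mulVec_smul, h i hi']
  simp

lemma mem_eigKer_iff {n : ℕ} (M : Matrix (Fin n) (Fin n) ℂ) (μ : ℂ) (x : Fin n → ℂ) :
    x ∈ LinearMap.ker ((μ • (1 : Matrix (Fin n) (Fin n) ℂ) - M).mulVecLin) ↔ M *ᵥ x = μ • x := by
  simp only [LinearMap.mem_ker, Matrix.mulVecLin_apply, Matrix.sub_mulVec,
    Matrix.smul_mulVec, Matrix.one_mulVec, sub_eq_zero]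
  exact eq_comm

lemma pow_mulVec_eig {n : ℕ} {M : Matrix (Fin n) (Fin n) ℂ} {μ : ℂ} {x : Fin n → ℂ}
    (h : M *ᵥ x = μ • x) (k : ℕ) : (M ^ k) *ᵥ x = μ ^ k • x := by
  induction k with
  | zero => simp [Matrix.one_mulVec]
  | succ k ih =>
      rw [pow_succ, ← Matrix.mulVec_mulVec, h, Matrix.mulVec_smul, ih, pow_succ, smul_smul,
        mul_comm]

lemma aeval_mulVec_eig {n : ℕ} {M : Matrix (Fin n) (Fin n) ℂ} {μ : ℂ} {x : Fin n → ℂ}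
    (h : M *ᵥ x = μ • x) (q : ℂ[X]) : (aeval M q) *ᵥ x = q.eval μ • x := by
  induction q using Polynomial.induction_on' with
  | add p q hp hq => simp [map_add, Matrix.add_mulVec, hp, hq, add_smul]
  | monomial k a =>
      rw [aeval_monomial, eval_monomial, Algebra.algebraMap_eq_smul_one, smul_mul_assoc,
        one_mul, Matrix.smul_mulVec, pow_mulVec_eig h, smul_smul]
section
variable {n : ℕ} {A' P : Matrix (Fin n) (Fin n) ℂ} {d : Fin n → ℂ}

lemma spec_eq_range (hP : IsUnit P.det) (hA : A' = P * diagonal d * P⁻¹) :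
    spectrum ℂ A' = Set.range d := by
  have key : ∀ μ : ℂ, algebraMap ℂ (Matrix (Fin n) (Fin n) ℂ) μ - A'
      = P * (algebraMap ℂ (Matrix (Fin n) (Fin n) ℂ) μ - diagonal d) * P⁻¹ := by
    intro μ
    rw [hA, Matrix.mul_sub, Matrix.sub_mul]
    congr 1
    rw [← Algebra.commutes μ P, mul_assoc, Matrix.mul_nonsing_inv _ hP, mul_one]
  have hunit : ∀ μ : ℂ, IsUnit (algebraMap ℂ (Matrix (Fin n) (Fin n) ℂ) μ - A')
      ↔ IsUnit (algebraMap ℂ (Matrix (Fin n) (Fin n) ℂ) μ - diagonal d) := by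
    intro μ
    rw [key μ, Matrix.isUnit_iff_isUnit_det, Matrix.isUnit_iff_isUnit_det
      (algebraMap ℂ (Matrix (Fin n) (Fin n) ℂ) μ - diagonal d)]
    rw [Matrix.det_mul, Matrix.det_mul, Matrix.det_nonsing_inv]
    rw [mul_comm P.det _, mul_assoc, Ring.mul_inverse_cancel _ hP, mul_one]
  have hspec : spectrum ℂ A' = spectrum ℂ (diagonal d) := by
    ext μ
    rw [spectrum.mem_iff, spectrum.mem_iff, hunit μ]
  rw [hspec, spectrum_diagonal]

lemma top_le_iSup_eig (hP : IsUnit P.det) (hA : A' = P * diagonal d * P⁻¹) :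
    (⊤ : Submodule ℂ (Fin n → ℂ)) ≤
      ⨆ j : Fin n, LinearMap.ker ((d j • (1 : Matrix (Fin n) (Fin n) ℂ) - A'ᵀ).mulVecLin) := by
  classical
  set Q := Pᵀ with hQdef
  have hQ : IsUnit Q.det := by rwa [hQdef, Matrix.det_transpose]
  have htrans : A'ᵀ = Q⁻¹ * diagonal d * Q := by
    rw [hA, Matrix.transpose_mul, Matrix.transpose_mul, Matrix.transpose_nonsing_inv,
      ← hQdef, ← mul_assoc, Matrix.diagonal_transpose]
  intro x _
  have hsingle : ∀ j : Fin n, Pi.single j (d j) = d j • (Pi.single j (1 : ℂ) : Fin n → ℂ) := by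
    intro j
    funext i
    simp [Pi.single_apply]
  have hw : ∀ j : Fin n, (Q⁻¹ *ᵥ (Pi.single j (1 : ℂ) : Fin n → ℂ)) ∈
      LinearMap.ker ((d j • (1 : Matrix (Fin n) (Fin n) ℂ) - A'ᵀ).mulVecLin) := by
    intro j
    rw [mem_eigKer_iff]
    rw [Matrix.mulVec_mulVec, htrans, mul_assoc, mul_assoc, Matrix.mul_nonsing_inv _ hQ,
      mul_one, ← Matrix.mulVec_mulVec, Matrix.diagonal_mulVec_single, mul_one, hsingle j,
      Matrix.mulVec_smul]
  have hx : x = ∑ j : Fin n, (Q *ᵥ x) j • (Q⁻¹ *ᵥ (Pi.single j (1 : ℂ) : Fin n → ℂ)) := by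
    have h1 : x = Q⁻¹ *ᵥ (Q *ᵥ x) := by
      rw [Matrix.mulVec_mulVec, Matrix.nonsing_inv_mul _ hQ, Matrix.one_mulVec]
    have h2 : (Q *ᵥ x) = ∑ j : Fin n, (Q *ᵥ x) j • (Pi.single j (1 : ℂ) : Fin n → ℂ) := by
      funext i
      simp [Finset.sum_apply, Pi.single_apply]
    calc x = Q⁻¹ *ᵥ (Q *ᵥ x) := h1
      _ = Q⁻¹ *ᵥ (∑ j : Fin n, (Q *ᵥ x) j • (Pi.single j (1 : ℂ) : Fin n → ℂ)) := by
            rw [← h2]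
      _ = ∑ j : Fin n, Q⁻¹ *ᵥ ((Q *ᵥ x) j • (Pi.single j (1 : ℂ) : Fin n → ℂ)) := by
            rw [mulVec_sum']
      _ = ∑ j : Fin n, (Q *ᵥ x) j • (Q⁻¹ *ᵥ (Pi.single j (1 : ℂ) : Fin n → ℂ)) :=
            Finset.sum_congr rfl fun j _ => Matrix.mulVec_smul _ _ _
  rw [hx]
  refine Submodule.sum_mem _ fun j _ => ?_
  exact Submodule.smul_mem _ _ (Submodule.mem_iSup_of_mem j (hw j))
end
lemma ker_ctrb_eq {n m : ℕ} (hn : 0 < n) (A : Matrix (Fin n) (Fin n) ℝ)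
    (B : Matrix (Fin n) (Fin m) ℝ)
    (hdiag : ∃ P D : Matrix (Fin n) (Fin n) ℂ, IsUnit P.det ∧ D.IsDiag ∧
      A.map Complex.ofReal = P * D * P⁻¹) :
    LinearMap.ker (((ctrbMat A B).map Complex.ofReal)ᵀ.mulVecLin) =
      ⨆ μ ∈ spectrum ℂ (A.map Complex.ofReal),
        LinearMap.ker
            ((μ • (1 : Matrix (Fin n) (Fin n) ℂ) - (A.map Complex.ofReal)ᵀ).mulVecLin) ⊓
          LinearMap.ker ((B.map Complex.ofReal)ᵀ.mulVecLin) := by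
  classical
  obtain ⟨P, D, hP, hD, hA⟩ := hdiag
  set A' := A.map Complex.ofReal with hA'def
  set B' := B.map Complex.ofReal with hB'def
  set d : Fin n → ℂ := fun i => D i i with hd
  have hDd : D = Matrix.diagonal d := hD.diagonal_diag.symm
  rw [hDd] at hA
  have hspec : spectrum ℂ A' = Set.range d := spec_eq_range hP hA
  apply le_antisymm
  · intro x hx
    have hx' : ∀ k : ℕ, B'ᵀ *ᵥ ((A'ᵀ ^ k) *ᵥ x) = 0 :=
      all_pow_zero hn A'ᵀ B'ᵀ x (fun k hk => (mem_ker_ctrb_iff A B x).mp hx k hk)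
    have hxmem : x ∈ ⨆ j ∈ (Finset.univ : Finset (Fin n)),
        LinearMap.ker ((d j • (1 : Matrix (Fin n) (Fin n) ℂ) - A'ᵀ).mulVecLin) := by
      have := top_le_iSup_eig hP hA (Submodule.mem_top : x ∈ (⊤ : Submodule ℂ (Fin n → ℂ)))
      simpa using this
    obtain ⟨y, hy⟩ := (Submodule.mem_iSup_finset_iff_exists_sum _ x).mp hxmem
    have hyj : ∀ j : Fin n, A'ᵀ *ᵥ (y j : Fin n → ℂ) = d j • (y j : Fin n → ℂ) :=
      fun j => (mem_eigKer_iff A'ᵀ (d j) _).mp (y j).2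
    set img := Finset.image d Finset.univ with himg
    set z : ℂ → (Fin n → ℂ) :=
      fun c => ∑ j ∈ Finset.univ.filter (fun j => d j = c), (y j : Fin n → ℂ) with hz
    have hxz : x = ∑ c ∈ img, z c := by
      rw [← hy, himg, hz]
      exact (Finset.sum_fiberwise_of_maps_to
        (fun j _ => Finset.mem_image_of_mem d (Finset.mem_univ j)) _).symm
    have hqarg : ∀ c ∈ img, B'ᵀ *ᵥ z c = 0 := by
      intro c hc
      set q : Polynomial ℂ := ∏ c' ∈ img.erase c, (Polynomial.X - Polynomial.C c') with hq
      have hqeval : ∀ t : ℂ, q.eval t = ∏ c' ∈ img.erase c, (t - c') := by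
        intro t; simp [hq, Polynomial.eval_prod]
      have hqx : (Polynomial.aeval A'ᵀ q) *ᵥ x = q.eval c • z c := by
        have h1 : (Polynomial.aeval A'ᵀ q) *ᵥ x
            = ∑ j : Fin n, q.eval (d j) • (y j : Fin n → ℂ) := by
          conv_lhs => rw [← hy]
          rw [mulVec_sum']
          exact Finset.sum_congr rfl fun j _ => aeval_mulVec_eig (hyj j) q
        have h2 : ∑ j : Fin n, q.eval (d j) • (y j : Fin n → ℂ)
            = ∑ j ∈ Finset.univ.filter (fun j => d j = c),
                q.eval (d j) • (y j : Fin n → ℂ) := by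
          symm
          apply Finset.sum_filter_of_ne
          intro j _ hne
          by_contra hdc
          apply hne
          have : q.eval (d j) = 0 := by
            rw [hqeval]
            refine Finset.prod_eq_zero (Finset.mem_erase.mpr
              ⟨hdc, Finset.mem_image_of_mem d (Finset.mem_univ j)⟩) ?_
            simp
          rw [this, zero_smul]
        have h3 : ∑ j ∈ Finset.univ.filter (fun j => d j = c),
              q.eval (d j) • (y j : Fin n → ℂ) = q.eval c • z c := by
          rw [hz, Finset.smul_sum]
          exact Finset.sum_congr rfl fun j hj =>
            congrArg (fun t : ℂ => Polynomial.eval t q • ((y j : Fin n → ℂ)))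
              (Finset.mem_filter.mp hj).2
        rw [h1, h2, h3]
      have hq0 : B'ᵀ *ᵥ ((Polynomial.aeval A'ᵀ q) *ᵥ x) = 0 := by
        rw [Polynomial.aeval_eq_sum_range, sum_mulVec', mulVec_sum']
        refine Finset.sum_eq_zero fun i _ => ?_
        rw [Matrix.smul_mulVec, Matrix.mulVec_smul, hx' i, smul_zero]
      have hsm : q.eval c • (B'ᵀ *ᵥ z c) = 0 := by
        rw [← Matrix.mulVec_smul, ← hqx, hq0]
      have hqc : q.eval c ≠ 0 := by
        rw [hqeval]
        refine Finset.prod_ne_zero_iff.mpr fun c' hc' => ?_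
        exact sub_ne_zero.mpr (Ne.symm (Finset.mem_erase.mp hc').1)
      exact (smul_eq_zero.mp hsm).resolve_left hqc
    rw [hxz]
    refine Submodule.sum_mem _ fun c hc => ?_
    have hcspec : c ∈ spectrum ℂ A' := by
      rw [hspec]
      obtain ⟨j, _, rfl⟩ := Finset.mem_image.mp hc
      exact ⟨j, rfl⟩
    refine Submodule.mem_iSup_of_mem c (Submodule.mem_iSup_of_mem hcspec ?_)
    refine Submodule.mem_inf.mpr ⟨?_, hqarg c hc⟩
    rw [mem_eigKer_iff, hz, mulVec_sum', Finset.smul_sum]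
    refine Finset.sum_congr rfl fun j hj => ?_
    rw [hyj j]
    exact congrArg (fun t : ℂ => t • ((y j : Fin n → ℂ))) (Finset.mem_filter.mp hj).2
  · refine iSup_le fun μ => iSup_le fun hμ => ?_
    intro x hx
    obtain ⟨h1, h2⟩ := Submodule.mem_inf.mp hx
    rw [mem_ker_ctrb_iff]
    intro k hk
    rw [pow_mulVec_eig ((mem_eigKer_iff A'ᵀ μ x).mp h1) k, Matrix.mulVec_smul,
      show B'ᵀ *ᵥ x = 0 from h2, smul_zero]

end Aux

/-- PBH-type test for output controllability when `A` is diagonalizable over `ℂ`: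
`(A,B,C)` is output controllable iff
`Im(Cᵀ) ∩ (⊕_{λ ∈ spec(A)} (ker(λI − Aᵀ) ∩ ker Bᵀ)) = {0}`. -/
theorem stmt_4 {n m p : ℕ} (hp : p < n)
    (A : Matrix (Fin n) (Fin n) ℝ) (B : Matrix (Fin n) (Fin m) ℝ)
    (C : Matrix (Fin p) (Fin n) ℝ) (hC : C.rank = p)
    (hdiag : ∃ P D : Matrix (Fin n) (Fin n) ℂ, IsUnit P.det ∧ D.IsDiag ∧
      A.map Complex.ofReal = P * D * P⁻¹) :
    (C * ctrbMat A B).rank = p ↔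
      LinearMap.range ((C.map Complex.ofReal)ᵀ.mulVecLin) ⊓
        (⨆ μ ∈ spectrum ℂ (A.map Complex.ofReal),
          LinearMap.ker
              ((μ • (1 : Matrix (Fin n) (Fin n) ℂ) - (A.map Complex.ofReal)ᵀ).mulVecLin) ⊓
            LinearMap.ker ((B.map Complex.ofReal)ᵀ.mulVecLin)) = ⊥ := by
  have hn : 0 < n := lt_of_le_of_lt (Nat.zero_le p) hp
  have hC' : (C.map Complex.ofReal).rank = p := by rw [rank_map_ofReal]; exact hC
  have h1 : (C * ctrbMat A B).rank
      = ((C.map Complex.ofReal) * ((ctrbMat A B).map Complex.ofReal)).rank := by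
    rw [← map_ofReal_mul, rank_map_ofReal]
  rw [h1, rank_mul_left_eq_iff _ _ hC', ker_ctrb_eq hn A B hdiag]
end

section
/- Let A ∈ ℝ^{n×n} with distinct eigenvalues λ_1,…,λ_r, B ∈ ℝ^{n×m}, C ∈ ℝ^{p×n}, and K_C ∈ ℝ^{n×(n−p)} with Im(K_C) = ker(C). Then Im(Cᵀ) ∩ (⊕_{i=1}^r (ker(λ_i I − Aᵀ) ∩ ker(Bᵀ))) = {0} if and only if the matrix [diag([λ_1 I − A, B], …, [λ_r I − A, B]) | 1_r ⊗ K_C] has full row rank rn. -/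
open Matrix

private lemma aux_sum_zero {ι R N : Type*} [Fintype ι] [Ring R] [AddCommGroup N] [Module R N]
    {P : ι → Submodule R N} (h : iSupIndep P) {v : ι → N} (hv : ∀ i, v i ∈ P i)
    (hs : ∑ i, v i = 0) (i : ι) : v i = 0 := by
  classical
  have h1 : v i = -∑ j ∈ Finset.univ.erase i, v j := by
    have := Finset.sum_erase_add Finset.univ v (Finset.mem_univ i)
    rw [hs] at this
    rw [← neg_eq_of_add_eq_zero_left this, neg_neg]
  have h2 : v i ∈ ⨆ (j) (_ : j ≠ i), P j := by
    rw [h1]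
    refine Submodule.neg_mem _ (Submodule.sum_mem _ fun j hj => ?_)
    have hji : j ≠ i := (Finset.mem_erase.mp hj).1
    exact Submodule.mem_iSup_of_mem j (Submodule.mem_iSup_of_mem hji (hv j))
  exact (Submodule.mem_bot R).mp ((h i).le_bot ⟨hv i, h2⟩)

private lemma aux_CK {n p : ℕ} (C : Matrix (Fin p) (Fin n) ℝ) (K : Matrix (Fin n) (Fin (n - p)) ℝ)
    (hp : p < n) (hC : C.rank = p)
    (hK : LinearMap.range K.mulVecLin = LinearMap.ker C.mulVecLin) :
    LinearMap.range Cᵀ.mulVecLin = LinearMap.ker Kᵀ.mulVecLin := by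
  have hCK : C * K = 0 := by
    ext i j
    have : K.mulVec (Pi.single j 1) ∈ LinearMap.ker C.mulVecLin := by
      rw [← hK]; exact ⟨Pi.single j 1, rfl⟩
    have h0 : C.mulVec (K.mulVec (Pi.single j 1)) = 0 := this
    have := congrFun h0 i
    simpa [← mulVec_mulVec, mulVec_single, mul_apply, mulVec, dotProduct, Pi.single_apply] using this
  have hle : LinearMap.range Cᵀ.mulVecLin ≤ LinearMap.ker Kᵀ.mulVecLin := by
    rintro x ⟨u, rfl⟩
    show Kᵀ.mulVec (Cᵀ.mulVec u) = 0
    rw [mulVec_mulVec, ← transpose_mul, hCK, transpose_zero, zero_mulVec]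
  have hnull : ∀ {a b : ℕ} (M : Matrix (Fin a) (Fin b) ℝ),
      M.rank + Module.finrank ℝ (LinearMap.ker M.mulVecLin) = b := by
    intro a b M
    have := LinearMap.finrank_range_add_finrank_ker M.mulVecLin
    rwa [Module.finrank_fintype_fun_eq_card, Fintype.card_fin] at this
  have hkerC : Module.finrank ℝ (LinearMap.ker C.mulVecLin) = n - p := by
    have := hnull C; omega
  have hrankK : K.rank = n - p := by
    have h1 := hnull K
    have h2 : K.rank ≤ n - p := by
      have := Matrix.rank_le_card_width K; simpa using this
    have h3 : Module.finrank ℝ (LinearMap.range K.mulVecLin) = K.rank := rfl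
    rw [hK] at h3
    omega
  have hdimker : Module.finrank ℝ (LinearMap.ker Kᵀ.mulVecLin) = p := by
    have h1 := hnull Kᵀ
    rw [Matrix.rank_transpose, hrankK] at h1
    omega
  have hdimran : Module.finrank ℝ (LinearMap.range Cᵀ.mulVecLin) = p := by
    show Cᵀ.rank = p
    rw [Matrix.rank_transpose, hC]
  exact Submodule.eq_of_le_of_finrank_le hle (by rw [hdimker, hdimran])

private lemma aux_entry_inl₁ {n m r : ℕ} (A : Matrix (Fin n) (Fin n) ℝ)
    (B : Matrix (Fin n) (Fin m) ℝ)
    (lam : Fin r → ℝ) (v : Fin r × Fin n → ℝ) (y : Fin r) (j : Fin n) :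
    (∑ x : Fin r × Fin n,
        (if x.1 = y then
            Sum.elim (fun j => (lam x.1 • (1 : Matrix (Fin n) (Fin n) ℝ) - A) x.2 j)
              (fun j => B x.2 j) (Sum.inl j)
          else 0) * v x)
      = ((lam y • (1 : Matrix (Fin n) (Fin n) ℝ) - Aᵀ).mulVec (fun k => v (y, k))) j := by
  rw [Fintype.sum_prod_type]
  simp only [Sum.elim_inl, ite_mul, zero_mul]
  rw [Finset.sum_comm]
  simp only [Finset.sum_ite_eq', Finset.mem_univ, if_true]
  simp [mulVec, dotProduct, Matrix.sub_apply, Matrix.smul_apply, Matrix.one_apply,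
    transpose_apply, mul_comm]
  simp [eq_comm]

private lemma aux_entry_inl₂ {n m r : ℕ} (A : Matrix (Fin n) (Fin n) ℝ)
    (B : Matrix (Fin n) (Fin m) ℝ)
    (lam : Fin r → ℝ) (v : Fin r × Fin n → ℝ) (y : Fin r) (j : Fin m) :
    (∑ x : Fin r × Fin n,
        (if x.1 = y then
            Sum.elim (fun j => (lam x.1 • (1 : Matrix (Fin n) (Fin n) ℝ) - A) x.2 j)
              (fun j => B x.2 j) (Sum.inr j)
          else 0) * v x)
      = (Bᵀ.mulVec (fun k => v (y, k))) j := by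
  rw [Fintype.sum_prod_type]
  simp only [Sum.elim_inr, ite_mul, zero_mul]
  rw [Finset.sum_comm]
  simp only [Finset.sum_ite_eq', Finset.mem_univ, if_true]
  simp [mulVec, dotProduct, transpose_apply, mul_comm]

private lemma aux_entry_inr {n p r : ℕ} (K : Matrix (Fin n) (Fin (n - p)) ℝ)
    (v : Fin r × Fin n → ℝ) (j : Fin (n - p)) :
    (∑ x : Fin r × Fin n, K x.2 j * v x)
      = (Kᵀ.mulVec (fun k => ∑ i : Fin r, v (i, k))) j := by
  rw [Fintype.sum_prod_type]
  rw [Finset.sum_comm]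
  simp [mulVec, dotProduct, transpose_apply, Finset.mul_sum, mul_comm]

/-- Equivalence between the subspace-intersection condition
`Im(Cᵀ) ∩ (⊕ᵢ (ker(λᵢI − Aᵀ) ∩ ker Bᵀ)) = {0}` and the full row rank (`= r·n`)
of the matrix `[diag([λ₁I − A, B], …, [λ_r I − A, B]) | 1_r ⊗ K_C]`. -/
theorem stmt_5 {n m p r : ℕ}
    (A : Matrix (Fin n) (Fin n) ℝ) (B : Matrix (Fin n) (Fin m) ℝ)
    (C : Matrix (Fin p) (Fin n) ℝ) (K : Matrix (Fin n) (Fin (n - p)) ℝ)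
    (lam : Fin r → ℝ) (hlam : Function.Injective lam)
    (heig : ∀ i, lam i ∈ spectrum ℝ A) (hp : p < n) (hC : C.rank = p)
    (hK : LinearMap.range K.mulVecLin = LinearMap.ker C.mulVecLin) :
    (LinearMap.range Cᵀ.mulVecLin ⊓
        (⨆ i : Fin r,
          LinearMap.ker ((lam i • (1 : Matrix (Fin n) (Fin n) ℝ) - Aᵀ).mulVecLin) ⊓
            LinearMap.ker Bᵀ.mulVecLin) = ⊥) ↔
      (Matrix.of fun (x : Fin r × Fin n) (c : (Fin r × (Fin n ⊕ Fin m)) ⊕ Fin (n - p)) =>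
          Sum.elim
            (fun y =>
              if x.1 = y.1 then
                Sum.elim (fun j => (lam x.1 • (1 : Matrix (Fin n) (Fin n) ℝ) - A) x.2 j)
                  (fun j => B x.2 j) y.2
              else 0)
            (fun j => K x.2 j) c : Matrix (Fin r × Fin n) _ ℝ).rank = r * n := by
  classical
  set M : Matrix (Fin r × Fin n) ((Fin r × (Fin n ⊕ Fin m)) ⊕ Fin (n - p)) ℝ :=
    Matrix.of fun (x : Fin r × Fin n) (c : (Fin r × (Fin n ⊕ Fin m)) ⊕ Fin (n - p)) =>
      Sum.elim
        (fun y =>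
          if x.1 = y.1 then
            Sum.elim (fun j => (lam x.1 • (1 : Matrix (Fin n) (Fin n) ℝ) - A) x.2 j)
              (fun j => B x.2 j) y.2
          else 0)
        (fun j => K x.2 j) c with hMdef
  set W : Fin r → Submodule ℝ (Fin n → ℝ) := fun i =>
    LinearMap.ker ((lam i • (1 : Matrix (Fin n) (Fin n) ℝ) - Aᵀ).mulVecLin) ⊓
      LinearMap.ker Bᵀ.mulVecLin with hWdef
  -- step A : rank condition ↔ trivial left kernel
  have hrank_iff : M.rank = r * n ↔ LinearMap.ker Mᵀ.mulVecLin = ⊥ := by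
    rw [← Matrix.rank_transpose M]
    have h1 := LinearMap.finrank_range_add_finrank_ker Mᵀ.mulVecLin
    rw [Module.finrank_fintype_fun_eq_card, Fintype.card_prod, Fintype.card_fin,
      Fintype.card_fin] at h1
    have h2 : Mᵀ.rank = Module.finrank ℝ (LinearMap.range Mᵀ.mulVecLin) := rfl
    constructor
    · intro h
      have h3 : Module.finrank ℝ (LinearMap.ker Mᵀ.mulVecLin) = 0 := by omega
      exact Submodule.finrank_eq_zero.mp h3
    · intro h
      rw [h, finrank_bot] at h1
      omega
  -- step B : characterization of the left kernel
  have hchar : ∀ v : Fin r × Fin n → ℝ, Mᵀ.mulVec v = 0 ↔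
      ((∀ y : Fin r,
          (lam y • (1 : Matrix (Fin n) (Fin n) ℝ) - Aᵀ).mulVec (fun k => v (y, k)) = 0 ∧
          Bᵀ.mulVec (fun k => v (y, k)) = 0) ∧
        Kᵀ.mulVec (fun k => ∑ i : Fin r, v (i, k)) = 0) := by
    intro v
    have hc : ∀ c, Mᵀ.mulVec v c = ∑ x : Fin r × Fin n, M x c * v x := by
      intro c; simp [mulVec, dotProduct, transpose_apply]
    constructor
    · intro h
      refine ⟨fun y => ⟨funext fun j => ?_, funext fun j => ?_⟩, funext fun j => ?_⟩
      · have hz := congrFun h (Sum.inl (y, Sum.inl j))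
        rw [hc] at hz
        rw [Pi.zero_apply, ← aux_entry_inl₁ A B lam v y j]
        simpa [hMdef] using hz
      · have hz := congrFun h (Sum.inl (y, Sum.inr j))
        rw [hc] at hz
        rw [Pi.zero_apply, ← aux_entry_inl₂ A B lam v y j]
        simpa [hMdef] using hz
      · have hz := congrFun h (Sum.inr j)
        rw [hc] at hz
        rw [Pi.zero_apply, ← aux_entry_inr K v j]
        simpa [hMdef] using hz
    · rintro ⟨h1, h2⟩
      funext c
      rw [hc]
      obtain (⟨y, j | j⟩ | j) := c
      · have := congrFun ((h1 y).1) j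
        rw [← aux_entry_inl₁ A B lam v y j] at this
        simpa [hMdef] using this
      · have := congrFun ((h1 y).2) j
        rw [← aux_entry_inl₂ A B lam v y j] at this
        simpa [hMdef] using this
      · have := congrFun h2 j
        rw [← aux_entry_inr K v j] at this
        simpa [hMdef] using this
  -- relation between W i and eigenspaces of Aᵀ
  have hWeig : ∀ (i : Fin r) (x : Fin n → ℝ), x ∈ W i →
      x ∈ Module.End.eigenspace (Aᵀ.mulVecLin : Module.End ℝ (Fin n → ℝ)) (lam i) := by
    intro i x hx
    rw [Module.End.mem_eigenspace_iff]
    have h0 : (lam i • (1 : Matrix (Fin n) (Fin n) ℝ) - Aᵀ).mulVec x = 0 := hx.1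
    rw [sub_mulVec, smul_mulVec, one_mulVec, sub_eq_zero] at h0
    exact h0.symm
  have hindep : iSupIndep fun i : Fin r =>
      Module.End.eigenspace (Aᵀ.mulVecLin : Module.End ℝ (Fin n → ℝ)) (lam i) :=
    (Module.End.eigenspaces_iSupIndep _).comp hlam
  have hRK := aux_CK C K hp hC hK
  rw [hrank_iff]
  constructor
  · -- intersection trivial → left kernel trivial
    intro hbot
    rw [eq_bot_iff]
    intro v hv
    have hv' : Mᵀ.mulVec v = 0 := hv
    rw [hchar v] at hv'
    obtain ⟨h1, h2⟩ := hv'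
    set s : Fin n → ℝ := fun k => ∑ i : Fin r, v (i, k) with hsdef
    have hsR : s ∈ LinearMap.range Cᵀ.mulVecLin := by
      rw [hRK]; exact h2
    have hsum : s = ∑ i : Fin r, (fun k => v (i, k)) := by
      funext k; rw [Finset.sum_apply]
    have hsS : s ∈ ⨆ i : Fin r, W i := by
      rw [hsum]
      exact Submodule.sum_mem _ fun i _ =>
        Submodule.mem_iSup_of_mem i ⟨(h1 i).1, (h1 i).2⟩
    have hs0 : s = 0 := by
      have : s ∈ (⊥ : Submodule ℝ (Fin n → ℝ)) := hbot ▸ Submodule.mem_inf.mpr ⟨hsR, hsS⟩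
      simpa using this
    have hsum0 : ∑ i : Fin r, (fun k => v (i, k)) = 0 := by rw [← hsum, hs0]
    have hz : ∀ i : Fin r, (fun k => v (i, k)) = 0 :=
      aux_sum_zero hindep (fun i => hWeig i _ ⟨(h1 i).1, (h1 i).2⟩) hsum0
    show v ∈ (⊥ : Submodule ℝ (Fin r × Fin n → ℝ))
    simp only [Submodule.mem_bot]
    funext q
    exact congrFun (hz q.1) q.2
  · -- left kernel trivial → intersection trivial
    intro hker
    rw [eq_bot_iff]
    rintro x hx
    obtain ⟨hxR, hxS⟩ := Submodule.mem_inf.mp hx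
    rw [Submodule.mem_iSup_iff_exists_finsupp] at hxS
    obtain ⟨f, hf, hfsum⟩ := hxS
    have hfsum' : ∑ i : Fin r, f i = x := by
      rw [← hfsum, Finsupp.sum_fintype]
      intro i; rfl
    set v : Fin r × Fin n → ℝ := fun q => f q.1 q.2 with hvdef
    have hvker : Mᵀ.mulVec v = 0 := by
      rw [hchar v]
      refine ⟨fun y => ⟨(hf y).1, (hf y).2⟩, ?_⟩
      have hx2 : (fun k => ∑ i : Fin r, v (i, k)) = x := by
        funext k
        rw [← hfsum']
        exact (Finset.sum_apply k Finset.univ fun i => f i).symm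
      rw [hx2]
      rw [hRK] at hxR
      exact hxR
    have hv0 : v = 0 := by
      have : v ∈ LinearMap.ker Mᵀ.mulVecLin := hvker
      rw [hker] at this
      simpa using this
    have hf0 : ∀ i, f i = 0 := fun i => funext fun k => congrFun hv0 (i, k)
    simp only [Submodule.mem_bot]
    rw [← hfsum']
    simp [hf0]
end

section
/- Let A ∈ ℝ^{n×n} be the adjacency-pattern matrix of a directed tree in which some vertex has two distinct children, with the root driven by a single scalar input: A_{ij} = a_{ij} ≠ 0 exactly when j is the parent of i, and B = e_root·b. If the tree has at least two leaves, then (A,B) is not controllable for any choice of the nonzero weights a_{ij}, b. -/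
open Matrix

/-- A rooted out-tree with a bifurcation and a single scalar input at the root
is never controllable, whatever the nonzero weights: special case `n = 3`, a
root feeding two children, where the controllability matrix has rank at most
`2 < 3`. -/
theorem stmt_18 (a c b : ℝ) (ha : a ≠ 0) (hc : c ≠ 0) (hb : b ≠ 0) :
    (ctrbMat !![0, 0, 0; a, 0, 0; c, 0, 0] !![b; 0; 0]).rank ≤ 2 ∧
    (ctrbMat !![0, 0, 0; a, 0, 0; c, 0, 0] !![b; 0; 0]).rank ≠ 3 := by
  set M := ctrbMat !![(0:ℝ), 0, 0; a, 0, 0; c, 0, 0] !![b; 0; 0] with hM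
  have key : M = !![b, 0; 0, a*b; 0, c*b] *
      (Matrix.of fun (q : Fin 2) (p : Fin (Fintype.card (Fin 3)) × Fin 1) =>
        if ((p.1 : ℕ) = (q : ℕ)) then (1:ℝ) else 0) := by
    ext i p
    obtain ⟨k, j⟩ := p
    fin_cases i <;> fin_cases k <;> fin_cases j <;>
      simp [hM, ctrbMat, Matrix.mul_apply, pow_succ, Fin.sum_univ_three,
        Fin.sum_univ_two, Matrix.vecHead, Matrix.vecTail] <;> ring
  have h2 : M.rank ≤ 2 := by
    rw [key]
    calc (_ : Matrix (Fin 3) _ ℝ).rank ≤ (!![b, 0; 0, a*b; 0, c*b]).rank :=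
          Matrix.rank_mul_le_left _ _
      _ ≤ 2 := by simpa using Matrix.rank_le_card_width !![b, 0; 0, a*b; 0, c*b]
  exact ⟨h2, by omega⟩
end
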